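/- arXiv:1702.05741 — 2 statements merged into one kernel-verified Lean document; each statement's English description precedes it below -/
import Mathlib

section
/- For an [n,k,d]_q linear code C and any x with 1 ≤ x ≤ ρ (ρ = max{x : Φ(x) − x < k}), there exists an [n', k', d']_q linear code with n' = n − Φ(x), k' ≥ k + x − Φ(x) > 0, and d' ≥ d. Consequently d ≤ min_{1≤x≤ρ} d_q^{opt}(n − Φ(x), k + x − Φ(x)), where d_q^{opt}(n',k') is the largest minimum distance of any [n',k']_q linear code. -/
open scoped Classical

/-- `R` is a regenerating set of coordinate `i` for the code with generator matrix `G`: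
`i ∈ R` and the `i`-th column of `G` is a linear combination of the columns indexed by `R \ {i}`. -/
def regenSet {𝔽 : Type*} [Field 𝔽] {m n : ℕ} (G : Matrix (Fin m) (Fin n) 𝔽)
    (i : Fin n) (R : Finset (Fin n)) : Prop :=
  i ∈ R ∧ (fun t => G t i) ∈ Submodule.span 𝔽 ((fun j => fun t => G t j) '' ↑(R.erase i))

/-- A sequence of regenerating sets `R j` of coordinates `l j` with a nontrivial union. -/
def ntUnion {𝔽 : Type*} [Field 𝔽] {m n : ℕ} (G : Matrix (Fin m) (Fin n) 𝔽) (x : ℕ)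
    (l : Fin x → Fin n) (R : Fin x → Finset (Fin n)) : Prop :=
  (∀ j, regenSet G (l j) (R j)) ∧ ∀ j j' : Fin x, j' < j → l j ∉ R j'

/-- `Φ(x)`: minimum size of the union of `x` regenerating sets having a nontrivial union. -/
noncomputable def Phi {𝔽 : Type*} [Field 𝔽] {m n : ℕ} (G : Matrix (Fin m) (Fin n) 𝔽)
    (x : ℕ) : ℕ :=
  sInf {c | ∃ (l : Fin x → Fin n) (R : Fin x → Finset (Fin n)),
    ntUnion G x l R ∧ (Finset.univ.biUnion R).card = c}

/-- `ρ = max { x : Φ(x) − x < k }` (over those `x` where `Φ` is defined). -/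
noncomputable def rho {𝔽 : Type*} [Field 𝔽] {m n : ℕ} (G : Matrix (Fin m) (Fin n) 𝔽)
    (k : ℕ) : ℕ :=
  sSup {x | (∃ (l : Fin x → Fin n) (R : Fin x → Finset (Fin n)), ntUnion G x l R) ∧
    Phi G x - x < k}

/-- The linear code generated by the rows of `G`. -/
def rowCode {𝔽 : Type*} [Field 𝔽] {m n : ℕ} (G : Matrix (Fin m) (Fin n) 𝔽) :
    Submodule 𝔽 (Fin n → 𝔽) :=
  Submodule.span 𝔽 (Set.range fun t => G t)

/-- Hamming weight of a vector. -/
noncomputable def wt {𝔽 : Type*} [Field 𝔽] {n : ℕ} (c : Fin n → 𝔽) : ℕ :=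
  (Finset.univ.filter fun j => c j ≠ 0).card

/-- Minimum (Hamming) distance of a linear code. -/
noncomputable def minDist {𝔽 : Type*} [Field 𝔽] {n : ℕ} (C : Submodule 𝔽 (Fin n → 𝔽)) : ℕ :=
  sInf {w | ∃ c ∈ C, c ≠ 0 ∧ wt c = w}

/-- Membership in the dual code `C⊥`. -/
def inDual {𝔽 : Type*} [Field 𝔽] {n : ℕ} (C : Submodule 𝔽 (Fin n → 𝔽))
    (e : Fin n → 𝔽) : Prop :=
  ∀ c ∈ C, ∑ j, e j * c j = 0

/-- Ceiling of natural division: `cdiv a b = ⌈a / b⌉`. -/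
def cdiv (a b : ℕ) : ℕ := (a + b - 1) / b

/-- All coordinates in `T` have `(r, δ)`-locality (Definition 3.1/3.2). -/
def hasLocality {𝔽 : Type*} [Field 𝔽] {m n : ℕ} (G : Matrix (Fin m) (Fin n) 𝔽)
    (T : Finset (Fin n)) (r δ : ℕ) : Prop :=
  ∀ ι ∈ T, ∃ S ⊆ T, ι ∈ S ∧ δ ≤ S.card ∧ S.card ≤ r + δ - 1 ∧
    ∀ E ⊆ S, E.card = δ - 1 → ∀ j ∈ E, regenSet G j ((S \ E) ∪ {j})
/-- `d_q^{opt}(n', k')`: the largest minimum distance of an `[n', k']` linear code over `𝔽`. -/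
noncomputable def dOpt (𝔽 : Type*) [Field 𝔽] (n' k' : ℕ) : ℕ :=
  sSup {d' | ∃ C : Submodule 𝔽 (Fin n' → 𝔽), Module.finrank 𝔽 C = k' ∧ minDist C = d'}

section Aux

open Finset Module

variable {𝔽 : Type*} [Field 𝔽] {m n : ℕ}

lemma ntUnion_inj {x : ℕ} {G : Matrix (Fin m) (Fin n) 𝔽} {l : Fin x → Fin n}
    {R : Fin x → Finset (Fin n)} (h : ntUnion G x l R) : Function.Injective l := by
  intro a b hab
  by_contra hne
  rcases Ne.lt_or_gt hne with hlt | hlt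
  · exact h.2 b a hlt (hab ▸ (h.1 a).1)
  · exact h.2 a b hlt (hab.symm ▸ (h.1 b).1)

lemma ntUnion_le_card {x : ℕ} {G : Matrix (Fin m) (Fin n) 𝔽} {l : Fin x → Fin n}
    {R : Fin x → Finset (Fin n)} (h : ntUnion G x l R) :
    x ≤ (Finset.univ.biUnion R).card := by
  have h1 : (Finset.univ.image l).card = x := by
    rw [Finset.card_image_of_injective _ (ntUnion_inj h)]; simp
  have h2 : Finset.univ.image l ⊆ Finset.univ.biUnion R := by
    intro u hu
    simp only [Finset.mem_image] at hu
    obtain ⟨j, -, rfl⟩ := hu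
    exact Finset.mem_biUnion.2 ⟨j, Finset.mem_univ j, (h.1 j).1⟩
  have := Finset.card_le_card h2
  omega

lemma ntUnion_le_n {x : ℕ} {G : Matrix (Fin m) (Fin n) 𝔽} {l : Fin x → Fin n}
    {R : Fin x → Finset (Fin n)} (h : ntUnion G x l R) : x ≤ n := by
  simpa using Fintype.card_le_of_injective l (ntUnion_inj h)

lemma ntUnion_trunc {x y : ℕ} (hxy : x ≤ y) {G : Matrix (Fin m) (Fin n) 𝔽} {l : Fin y → Fin n}
    {R : Fin y → Finset (Fin n)} (h : ntUnion G y l R) :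
    ntUnion G x (l ∘ Fin.castLE hxy) (R ∘ Fin.castLE hxy) ∧
    (Finset.univ.biUnion (R ∘ Fin.castLE hxy)).card + (y - x) ≤
      (Finset.univ.biUnion R).card := by
  constructor
  · refine ⟨fun j => h.1 _, fun j j' hj => h.2 _ _ ?_⟩
    exact hj
  · set T : Finset (Fin n) := (Finset.univ.filter fun j : Fin y => x ≤ (j : ℕ)).image l with hT
    have hTcard : T.card = y - x := by
      rw [hT, Finset.card_image_of_injective _ (ntUnion_inj h)]
      have h2 : (Finset.univ.filter fun j : Fin y => ¬ x ≤ (j : ℕ)) =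
          Finset.univ.image (Fin.castLE hxy) := by
        ext j
        simp only [Finset.mem_filter, Finset.mem_univ, true_and, Finset.mem_image, not_le]
        constructor
        · intro hj; exact ⟨⟨(j : ℕ), hj⟩, Fin.ext rfl⟩
        · rintro ⟨i, rfl⟩; exact i.2
      have h3 := Finset.card_filter_add_card_filter_not
        (s := (Finset.univ : Finset (Fin y))) (p := fun j : Fin y => x ≤ (j : ℕ))
      rw [h2, Finset.card_image_of_injective _ (Fin.castLE_injective hxy)] at h3
      simp only [Finset.card_univ, Fintype.card_fin] at h3
      omega
    have hdisj : Disjoint (Finset.univ.biUnion (R ∘ Fin.castLE hxy)) T := by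
      rw [Finset.disjoint_right]
      intro u hu hu2
      simp only [hT, Finset.mem_image, Finset.mem_filter, Finset.mem_univ, true_and] at hu
      obtain ⟨j, hj, rfl⟩ := hu
      simp only [Finset.mem_biUnion, Function.comp] at hu2
      obtain ⟨i, -, hi⟩ := hu2
      exact h.2 j (Fin.castLE hxy i) (Fin.lt_iff_val_lt_val.2 (by simpa using lt_of_lt_of_le i.2 hj)) hi
    have hsub : (Finset.univ.biUnion (R ∘ Fin.castLE hxy)) ∪ T ⊆ Finset.univ.biUnion R := by
      apply Finset.union_subset
      · intro u hu
        simp only [Finset.mem_biUnion, Function.comp] at hu ⊢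
        obtain ⟨i, -, hi⟩ := hu
        exact ⟨_, Finset.mem_univ _, hi⟩
      · intro u hu
        simp only [hT, Finset.mem_image] at hu
        obtain ⟨j, -, rfl⟩ := hu
        exact Finset.mem_biUnion.2 ⟨j, Finset.mem_univ _, (h.1 j).1⟩
    calc (Finset.univ.biUnion (R ∘ Fin.castLE hxy)).card + (y - x)
        = ((Finset.univ.biUnion (R ∘ Fin.castLE hxy)) ∪ T).card := by
          rw [Finset.card_union_of_disjoint hdisj, hTcard]
      _ ≤ (Finset.univ.biUnion R).card := Finset.card_le_card hsub

lemma regen_dual (G : Matrix (Fin m) (Fin n) 𝔽) (i : Fin n) (Rs : Finset (Fin n))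
    (h : regenSet G i Rs) :
    ∃ e : Fin n → 𝔽, e i = -1 ∧ (∀ u, u ∉ Rs → e u = 0) ∧
      ∀ c ∈ rowCode G, ∑ u, e u * c u = 0 := by
  classical
  obtain ⟨hi, hspan⟩ := h
  rw [Finsupp.mem_span_image_iff_linearCombination] at hspan
  obtain ⟨lc, hlc, hsum⟩ := hspan
  rw [Finsupp.mem_supported] at hlc
  have hsupp : ∀ u, u ∉ Rs.erase i → lc u = 0 := by
    intro u hu
    by_contra h0
    exact hu (hlc (Finsupp.mem_support_iff.2 h0))
  have hlci : lc i = 0 := hsupp i (Finset.notMem_erase i Rs)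
  set e : Fin n → 𝔽 := fun u => if u = i then -1 else lc u with he
  have hrow : ∀ t, ∑ u, e u * G t u = 0 := by
    intro t
    have h2 : ∑ u ∈ lc.support, lc u * G t u = G t i := by
      have h1 := congrFun hsum t
      rw [Finsupp.linearCombination_apply, Finsupp.sum] at h1
      simpa using h1
    have h3 : ∑ u, lc u * G t u = G t i := by
      rw [← h2]
      exact (Finset.sum_subset (Finset.subset_univ _)
        (fun u _ hu => by simp [Finsupp.notMem_support_iff.1 hu])).symm
    have h4 : ∀ u, e u * G t u = lc u * G t u - (if u = i then G t u else 0) := by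
      intro u
      by_cases hu : u = i
      · subst hu; simp [he, hlci]
      · simp [he, hu]
    rw [Finset.sum_congr rfl (fun u _ => h4 u), Finset.sum_sub_distrib, h3,
      Finset.sum_ite_eq' Finset.univ i, if_pos (Finset.mem_univ i), sub_self]
  set L : (Fin n → 𝔽) →ₗ[𝔽] 𝔽 := ∑ u, e u • LinearMap.proj u with hL
  have hLapp : ∀ c : Fin n → 𝔽, L c = ∑ u, e u * c u := by
    intro c
    simp [hL, LinearMap.sum_apply, LinearMap.smul_apply, LinearMap.proj_apply, smul_eq_mul]
  refine ⟨e, by simp [he], ?_, ?_⟩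
  · intro u hu
    have h1 : u ≠ i := fun hui => hu (hui ▸ hi)
    have h2 : u ∉ Rs.erase i := fun h2 => hu (Finset.mem_of_mem_erase h2)
    simp [he, h1, hsupp u h2]
  · intro c hc
    have hle : rowCode G ≤ LinearMap.ker L := by
      rw [rowCode, Submodule.span_le]
      rintro _ ⟨t, rfl⟩
      simp only [SetLike.mem_coe, LinearMap.mem_ker]
      rw [hLapp]
      exact hrow t
    have := hle hc
    rw [LinearMap.mem_ker] at this
    rw [← hLapp]
    exact this

lemma shortened {x : ℕ} (G : Matrix (Fin m) (Fin n) 𝔽)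
    (l : Fin x → Fin n) (R : Fin x → Finset (Fin n)) (h : ntUnion G x l R) :
    ∃ C' : Submodule 𝔽 (Fin (n - (Finset.univ.biUnion R).card) → 𝔽),
      Module.finrank 𝔽 (rowCode G) + x ≤ Module.finrank 𝔽 C' + (Finset.univ.biUnion R).card ∧
      ∀ c' ∈ C', c' ≠ 0 → ∃ c ∈ rowCode G, c ≠ 0 ∧ wt c = wt c' := by
  classical
  set U := Finset.univ.biUnion R with hUdef
  set Φ := U.card with hΦdef
  have hRU : ∀ j, R j ⊆ U := fun j => Finset.subset_biUnion_of_mem R (Finset.mem_univ j)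
  have hUc : Uᶜ.card = n - Φ := by rw [Finset.card_compl, Fintype.card_fin]
  set emb := Uᶜ.orderEmbOfFin hUc with hembdef
  have hembmem : ∀ i, emb i ∈ Uᶜ := fun i => Finset.orderEmbOfFin_mem _ _ i
  set res : (Fin n → 𝔽) →ₗ[𝔽] (Fin (n - Φ) → 𝔽) := LinearMap.funLeft 𝔽 𝔽 emb with hres
  set Z : Submodule 𝔽 (Fin n → 𝔽) := ⨅ u ∈ U, LinearMap.ker (LinearMap.proj u) with hZdef
  have hZ : ∀ f : Fin n → 𝔽, f ∈ Z ↔ ∀ u ∈ U, f u = 0 := by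
    intro f
    simp [hZdef, Submodule.mem_iInf, LinearMap.mem_ker]
  set CZ := rowCode G ⊓ Z with hCZ
  refine ⟨Submodule.map res CZ, ?_, ?_⟩
  · -- rank bound
    choose e he1 he2 he3 using fun j => regen_dual G (l j) (R j) (h.1 j)
    set p : rowCode G →ₗ[𝔽] ({u // u ∈ U} → 𝔽) :=
      (LinearMap.funLeft 𝔽 𝔽 (Subtype.val : {u // u ∈ U} → Fin n)).comp
        (rowCode G).subtype with hp
    have hpapp : ∀ (c : rowCode G) (u : {u // u ∈ U}), p c u = (c : Fin n → 𝔽) u.1 := by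
      intro c u; simp [hp, LinearMap.funLeft_apply]
    have hker : Submodule.map (rowCode G).subtype (LinearMap.ker p) = CZ := by
      ext c
      simp only [Submodule.mem_map, LinearMap.mem_ker, hCZ, Submodule.mem_inf]
      constructor
      · rintro ⟨⟨c, hc⟩, hpc, rfl⟩
        refine ⟨hc, (hZ c).2 fun u hu => ?_⟩
        have := congrFun hpc ⟨u, hu⟩
        rwa [hpapp] at this
      · rintro ⟨hc, hcz⟩
        exact ⟨⟨c, hc⟩, funext fun u => by rw [hpapp]; exact (hZ c).1 hcz u.1 u.2, rfl⟩
    have e1 : Module.finrank 𝔽 (LinearMap.ker p) = Module.finrank 𝔽 CZ := by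
      rw [← hker, Submodule.finrank_map_subtype_eq]
    -- functionals
    set φ : Fin x → Module.Dual 𝔽 ({u // u ∈ U} → 𝔽) :=
      fun j => ∑ u : {u // u ∈ U}, e j u.1 • LinearMap.proj u with hφ
    have hφapp : ∀ j g, φ j g = ∑ u : {u // u ∈ U}, e j u.1 * g u := by
      intro j g
      simp [hφ, LinearMap.sum_apply, LinearMap.smul_apply, LinearMap.proj_apply, smul_eq_mul]
    have hφc : ∀ j (c : rowCode G), φ j (p c) = 0 := by
      rintro j ⟨c, hc⟩
      rw [hφapp]
      have hstep : ∑ u : {u // u ∈ U}, e j u.1 * (p ⟨c, hc⟩) u = ∑ u, e j u * c u := by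
        rw [Finset.sum_congr rfl (fun u _ => by rw [hpapp])]
        rw [Finset.sum_coe_sort U (fun u => e j u * c u)]
        exact Finset.sum_subset (Finset.subset_univ _)
          (fun u _ hu => by rw [he2 j u (fun hr => hu (hRU j hr))]; ring)
      rw [hstep]
      exact he3 j c hc
    have hli : LinearIndependent 𝔽 φ := by
      rw [Fintype.linearIndependent_iff]
      intro g hg
      by_contra hne
      push_neg at hne
      obtain ⟨j1, hj1⟩ := hne
      set S := Finset.univ.filter (fun j : Fin x => g j ≠ 0) with hS
      have hSne : S.Nonempty := ⟨j1, by simp [hS, hj1]⟩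
      set j0 := S.max' hSne with hj0
      have hj0S : j0 ∈ S := S.max'_mem hSne
      have hgj0 : g j0 ≠ 0 := (Finset.mem_filter.1 hj0S).2
      have hlj0U : l j0 ∈ U := hRU j0 (h.1 j0).1
      set δ : {u // u ∈ U} → 𝔽 := fun u => if u.1 = l j0 then 1 else 0 with hδ
      have happ : ∀ j, φ j δ = e j (l j0) := by
        intro j
        rw [hφapp]
        rw [Finset.sum_eq_single (⟨l j0, hlj0U⟩ : {u // u ∈ U})]
        · simp [hδ]
        · intro u _ hu
          have hne2 : u.1 ≠ l j0 := fun he => hu (Subtype.ext he)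
          simp [hδ, hne2]
        · intro habs; exact absurd (Finset.mem_univ _) habs
      have h0 : ∑ j, g j * e j (l j0) = 0 := by
        have h1 : (∑ i, g i • φ i) δ = 0 := by rw [hg]; simp
        rw [LinearMap.sum_apply] at h1
        calc ∑ j, g j * e j (l j0) = ∑ j, (g j • φ j) δ := by
              refine Finset.sum_congr rfl fun j _ => ?_
              rw [LinearMap.smul_apply, happ j, smul_eq_mul]
          _ = 0 := h1
      have h2 : ∑ j, g j * e j (l j0) = g j0 * e j0 (l j0) := by
        apply Finset.sum_eq_single_of_mem j0 (Finset.mem_univ _)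
        intro j _ hjne
        by_cases hgj : g j = 0
        · rw [hgj]; ring
        · have hjS : j ∈ S := Finset.mem_filter.2 ⟨Finset.mem_univ _, hgj⟩
          have hle : j ≤ j0 := Finset.le_max' S j hjS
          have hlt : j < j0 := lt_of_le_of_ne hle hjne
          rw [he2 j (l j0) (fun hr => h.2 j0 j hlt hr)]
          ring
      rw [h2, he1 j0, mul_neg_one, neg_eq_zero] at h0
      exact hgj0 h0
    have hWrank : Module.finrank 𝔽 (Submodule.span 𝔽 (Set.range φ)) = x := by
      rw [finrank_span_eq_card hli, Fintype.card_fin]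
    have hrange : LinearMap.range p ≤ (Submodule.span 𝔽 (Set.range φ)).dualCoannihilator := by
      rintro _ ⟨c, rfl⟩
      rw [Submodule.mem_dualCoannihilator]
      intro ψ hψ
      have hle : Submodule.span 𝔽 (Set.range φ) ≤
          LinearMap.ker (Module.Dual.eval 𝔽 ({u // u ∈ U} → 𝔽) (p c)) := by
        rw [Submodule.span_le]
        rintro _ ⟨j, rfl⟩
        simp only [SetLike.mem_coe, LinearMap.mem_ker, Module.Dual.eval_apply]
        exact hφc j c
      have := hle hψ
      rwa [LinearMap.mem_ker, Module.Dual.eval_apply] at this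
    have hcoann : Module.finrank 𝔽 (Submodule.span 𝔽 (Set.range φ)).dualCoannihilator + x = Φ := by
      have := Subspace.finrank_add_finrank_dualCoannihilator_eq (Submodule.span 𝔽 (Set.range φ))
      rw [hWrank] at this
      rw [Module.finrank_fintype_fun_eq_card, Fintype.card_coe] at this
      omega
    have e2 : Module.finrank 𝔽 (LinearMap.range p) + x ≤ Φ := by
      have := Submodule.finrank_mono hrange
      omega
    have e3 : Module.finrank 𝔽 (LinearMap.range p) + Module.finrank 𝔽 (LinearMap.ker p) =
        Module.finrank 𝔽 (rowCode G) := LinearMap.finrank_range_add_finrank_ker p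
    -- res injective on CZ
    set q : CZ →ₗ[𝔽] (Fin (n - Φ) → 𝔽) := res.comp CZ.subtype with hq
    have hqker : LinearMap.ker q = ⊥ := by
      rw [LinearMap.ker_eq_bot']
      rintro ⟨c, hcC, hcZ⟩ hqc
      ext1
      funext u
      by_cases hu : u ∈ U
      · exact (hZ c).1 hcZ u hu
      · have : u ∈ (↑(Uᶜ) : Set (Fin n)) := by simpa using hu
        rw [← Finset.range_orderEmbOfFin Uᶜ hUc] at this
        obtain ⟨i, hi⟩ := this
        have := congrFun hqc i
        simp only [hq, LinearMap.comp_apply, Submodule.coe_subtype, hres,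
          LinearMap.funLeft_apply] at this
        rw [← hi]
        simpa using this
    have e4 : Module.finrank 𝔽 CZ = Module.finrank 𝔽 (Submodule.map res CZ) := by
      have hrn := LinearMap.finrank_range_add_finrank_ker q
      rw [hqker] at hrn
      have hrange : LinearMap.range q = Submodule.map res CZ := by
        rw [hq, LinearMap.range_comp, Submodule.range_subtype]
      rw [hrange] at hrn
      simpa using hrn.symm
    omega
  · -- weight transfer
    rintro c' ⟨c, hcmem, rfl⟩ hne
    obtain ⟨hcC, hcZ⟩ := hcmem
    have hc0 : c ≠ 0 := by rintro rfl; simp at hne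
    refine ⟨c, hcC, hc0, ?_⟩
    unfold wt
    have himg : (Finset.univ.filter fun u => c u ≠ 0) =
        (Finset.univ.filter fun i => res c i ≠ 0).image emb := by
      ext u
      simp only [Finset.mem_filter, Finset.mem_univ, true_and, Finset.mem_image]
      constructor
      · intro hu
        have hnotU : u ∉ U := fun hU' => hu ((hZ c).1 hcZ u hU')
        have : u ∈ (↑(Uᶜ) : Set (Fin n)) := by simpa using hnotU
        rw [← Finset.range_orderEmbOfFin Uᶜ hUc] at this
        obtain ⟨i, hi⟩ := this
        refine ⟨i, ?_, hi⟩
        show c (emb i) ≠ 0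
        rw [hembdef, hi]
        exact hu
      · rintro ⟨i, hi, rfl⟩
        simpa [hres, LinearMap.funLeft_apply] using hi
    rw [himg, Finset.card_image_of_injective _ emb.injective]

lemma exists_ne_zero_of_finrank_pos {n' : ℕ} {W : Submodule 𝔽 (Fin n' → 𝔽)}
    (h : 0 < Module.finrank 𝔽 W) : ∃ c ∈ W, c ≠ 0 := by
  have : Nontrivial W := Module.finrank_pos_iff.mp h
  obtain ⟨c, hc⟩ := exists_ne (0 : W)
  exact ⟨c, c.2, fun h0 => hc (Subtype.ext h0)⟩

lemma wt_le {n' : ℕ} (c : Fin n' → 𝔽) : wt c ≤ n' := by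
  unfold wt
  simpa using Finset.card_filter_le Finset.univ (fun j => c j ≠ 0)

end Aux
/-- shortening along regenerating sets yields an `[n − Φ(x), ≥ k + x − Φ(x), ≥ d]`
code for every `1 ≤ x ≤ ρ`; consequently `d ≤ d_q^{opt}(n − Φ(x), k + x − Φ(x))`. -/
theorem shortening_bound {𝔽 : Type*} [Field 𝔽] {m n : ℕ}
    (G : Matrix (Fin m) (Fin n) 𝔽) (k d : ℕ)
    (hk : k = Module.finrank 𝔽 (rowCode G)) (hk1 : 1 ≤ k)
    (hd : d = minDist (rowCode G)) :
    ∀ x, 1 ≤ x → x ≤ rho G k →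
      (∃ C' : Submodule 𝔽 (Fin (n - Phi G x) → 𝔽),
        0 < k + x - Phi G x ∧ k + x - Phi G x ≤ Module.finrank 𝔽 C' ∧ d ≤ minDist C') ∧
      d ≤ dOpt 𝔽 (n - Phi G x) (k + x - Phi G x) := by
  
  classical
  intro x hx1 hxρ
  set Srho := {y | (∃ (l : Fin y → Fin n) (R : Fin y → Finset (Fin n)), ntUnion G y l R) ∧
    Phi G y - y < k} with hSrho
  have hrho_eq : rho G k = sSup Srho := rfl
  have hbdd : BddAbove Srho := by
    refine ⟨n, fun y hy => ?_⟩
    obtain ⟨⟨l, R, hnt⟩, -⟩ := hy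
    exact ntUnion_le_n hnt
  have hSne : Srho.Nonempty := by
    by_contra hS
    rw [Set.not_nonempty_iff_eq_empty] at hS
    rw [hrho_eq, hS, csSup_empty] at hxρ
    simp at hxρ
    omega
  have hmem : rho G k ∈ Srho := hrho_eq ▸ Nat.sSup_mem hSne hbdd
  obtain ⟨⟨lρ, Rρ, hntρ⟩, hphiρ⟩ := hmem
  -- Phi at ρ is achieved
  have hPhiρ_eq : Phi G (rho G k) = sInf {c | ∃ (l : Fin (rho G k) → Fin n)
      (R : Fin (rho G k) → Finset (Fin n)),
      ntUnion G (rho G k) l R ∧ (Finset.univ.biUnion R).card = c} := rfl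
  have hPhiρmem := Nat.sInf_mem (s := {c | ∃ (l : Fin (rho G k) → Fin n)
      (R : Fin (rho G k) → Finset (Fin n)),
      ntUnion G (rho G k) l R ∧ (Finset.univ.biUnion R).card = c}) ⟨_, lρ, Rρ, hntρ, rfl⟩
  rw [← hPhiρ_eq] at hPhiρmem
  obtain ⟨lr, Rr, hr, hcr⟩ := hPhiρmem
  -- truncation
  obtain ⟨hntx, hcard⟩ := ntUnion_trunc hxρ hr
  have hPhix_eq : Phi G x = sInf {c | ∃ (l : Fin x → Fin n) (R : Fin x → Finset (Fin n)),
      ntUnion G x l R ∧ (Finset.univ.biUnion R).card = c} := rfl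
  have hPhix_le : Phi G x ≤ (Finset.univ.biUnion (Rr ∘ Fin.castLE hxρ)).card := by
    rw [hPhix_eq]
    exact Nat.sInf_le ⟨_, _, hntx, rfl⟩
  have hρle : rho G k ≤ Phi G (rho G k) := hcr ▸ ntUnion_le_card hr
  have hPhixk : Phi G x < k + x := by
    rw [← hcr] at hphiρ hρle
    omega
  -- Phi at x is achieved
  have hPhixmem := Nat.sInf_mem (s := {c | ∃ (l : Fin x → Fin n) (R : Fin x → Finset (Fin n)),
      ntUnion G x l R ∧ (Finset.univ.biUnion R).card = c}) ⟨_, _, _, hntx, rfl⟩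
  rw [← hPhix_eq] at hPhixmem
  obtain ⟨l0, R0, h0, hc0⟩ := hPhixmem
  have hsh := shortened G l0 R0 h0
  rw [hc0] at hsh
  obtain ⟨C', hrank, hwt⟩ := hsh
  rw [← hk] at hrank
  have hkpos : 0 < k + x - Phi G x := by omega
  have hrk2 : k + x - Phi G x ≤ Module.finrank 𝔽 C' := by omega
  have key : ∀ W : Submodule 𝔽 (Fin (n - Phi G x) → 𝔽), W ≤ C' →
      0 < Module.finrank 𝔽 W → d ≤ minDist W := by
    intro W hWle hWpos
    obtain ⟨c', hc'W, hc'0⟩ := exists_ne_zero_of_finrank_pos hWpos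
    have hmd : minDist W = sInf {w | ∃ c ∈ W, c ≠ 0 ∧ wt c = w} := rfl
    rw [hmd]
    refine le_csInf ⟨wt c', ⟨c', hc'W, hc'0, rfl⟩⟩ ?_
    rintro w ⟨cw, hcw, hcw0, rfl⟩
    obtain ⟨c, hcC, hc0', hwteq⟩ := hwt cw (hWle hcw) hcw0
    rw [hd, ← hwteq]
    exact Nat.sInf_le ⟨c, hcC, hc0', rfl⟩
  refine ⟨⟨C', hkpos, hrk2, key C' le_rfl (lt_of_lt_of_le hkpos hrk2)⟩, ?_⟩
  -- dOpt part
  set k' := k + x - Phi G x with hk'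
  have hk'le : k' ≤ Module.finrank 𝔽 C' := hrk2
  set b := Module.finBasis 𝔽 C' with hb
  set v : Fin k' → (Fin (n - Phi G x) → 𝔽) := fun i => (b (Fin.castLE hk'le i) : _) with hv
  have hvli : LinearIndependent 𝔽 v := by
    have h1 := b.linearIndependent.comp (Fin.castLE hk'le) (Fin.castLE_injective hk'le)
    exact h1.map' C'.subtype (Submodule.ker_subtype C')
  set W := Submodule.span 𝔽 (Set.range v) with hW
  have hWrank : Module.finrank 𝔽 W = k' := by
    rw [hW, finrank_span_eq_card hvli, Fintype.card_fin]
  have hWle : W ≤ C' := by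
    rw [hW, Submodule.span_le]
    rintro _ ⟨i, rfl⟩
    exact (b (Fin.castLE hk'le i)).2
  have hdW : d ≤ minDist W := key W hWle (hWrank ▸ hkpos)
  have hbdd2 : BddAbove {d' | ∃ C : Submodule 𝔽 (Fin (n - Phi G x) → 𝔽),
      Module.finrank 𝔽 C = k' ∧ minDist C = d'} := by
    refine ⟨n - Phi G x, ?_⟩
    rintro d' ⟨C2, hC2rk, rfl⟩
    obtain ⟨c2, hc2, hc20⟩ := exists_ne_zero_of_finrank_pos (hC2rk ▸ hkpos)
    have hmd : minDist C2 = sInf {w | ∃ c ∈ C2, c ≠ 0 ∧ wt c = w} := rfl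
    rw [hmd]
    exact le_trans (Nat.sInf_le ⟨c2, hc2, hc20, rfl⟩) (wt_le c2)
  exact le_trans hdW (le_csSup hbdd2 ⟨W, hWrank, rfl⟩)
end

section
/- For an [n,k,d] code with two (r_i,δ_i)_{i∈{1,2}} localities: if r_1⌈n_1/(r_1+δ_1−1)⌉ ≥ k, then d ≤ n − k + 1 − (⌈k/r_1⌉ − 1)(δ_1 − 1). -/
open scoped Classical

section AuxiliaryLemmas

open Matrix

set_option synthInstance.maxHeartbeats 1000000
set_option maxHeartbeats 1000000

variable {𝔽 : Type*} [Field 𝔽] {m n : ℕ}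

/-- Span of the columns of `G` indexed by a finset `U`. -/
noncomputable def colSpan (G : Matrix (Fin m) (Fin n) 𝔽) (U : Finset (Fin n)) :
    Submodule 𝔽 (Fin m → 𝔽) :=
  Submodule.span 𝔽 ((fun j => fun t => G t j) '' ↑U)

lemma colSpan_mono (G : Matrix (Fin m) (Fin n) 𝔽) {U V : Finset (Fin n)} (h : U ⊆ V) :
    colSpan G U ≤ colSpan G V :=
  Submodule.span_mono (Set.image_mono h)

lemma colSpan_union (G : Matrix (Fin m) (Fin n) 𝔽) (U V : Finset (Fin n)) :
    colSpan G (U ∪ V) = colSpan G U ⊔ colSpan G V := by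
  rw [colSpan, Finset.coe_union, Set.image_union, Submodule.span_union]; rfl

lemma finrank_colSpan_le_card (G : Matrix (Fin m) (Fin n) 𝔽) (U : Finset (Fin n)) :
    Module.finrank 𝔽 (colSpan G U) ≤ U.card := by
  classical
  have h : colSpan G U = Submodule.span 𝔽 ↑(U.image fun j => fun t => G t j) := by
    rw [colSpan, Finset.coe_image]
  rw [h]
  exact (finrank_span_finset_le_card _).trans Finset.card_image_le

lemma finrank_colSpan_union_le (G : Matrix (Fin m) (Fin n) 𝔽) (U V : Finset (Fin n)) :
    Module.finrank 𝔽 (colSpan G (U ∪ V)) ≤ Module.finrank 𝔽 (colSpan G U) + V.card := by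
  rw [colSpan_union]
  exact (Submodule.finrank_add_le_finrank_add_finrank _ _).trans
    (by gcongr; exact finrank_colSpan_le_card G V)

/-- Row rank equals column rank, in the form we need: the rank of the projection of the
code onto the coordinates of `U` equals the rank of the columns indexed by `U`. -/
lemma rank_restrict_eq_colSpan (G : Matrix (Fin m) (Fin n) 𝔽) (U : Finset (Fin n)) :
    Module.finrank 𝔽 ((rowCode G).map
        (LinearMap.funLeft 𝔽 𝔽 (Subtype.val : {x // x ∈ U} → Fin n)))
      = Module.finrank 𝔽 (colSpan G U) := by
  classical
  set M : Matrix (Fin m) {x // x ∈ U} 𝔽 := fun t j => G t j.1 with hM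
  have h1 : (rowCode G).map (LinearMap.funLeft 𝔽 𝔽 (Subtype.val : {x // x ∈ U} → Fin n))
      = Submodule.span 𝔽 (Set.range ((Mᵀ)ᵀ)) := by
    rw [rowCode, Submodule.map_span, ← Set.range_comp]
    rfl
  have h2 : colSpan G U = Submodule.span 𝔽 (Set.range (Mᵀ)) := by
    rw [colSpan]
    congr 1
    have h3 : Set.range (Mᵀ)
        = Set.range ((fun j => fun t => G t j) ∘ (Subtype.val : {x // x ∈ U} → Fin n)) := rfl
    rw [h3, Set.range_comp, Subtype.range_val]
  rw [h1, h2]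
  change Module.finrank 𝔽 (Submodule.span 𝔽 (Set.range (Matrix.col Mᵀ))) = Module.finrank 𝔽 (Submodule.span 𝔽 (Set.range (Matrix.col M)))
  rw [← Matrix.range_mulVecLin, ← Matrix.range_mulVecLin]
  have := Matrix.rank_transpose M
  simpa [Matrix.rank] using this

/-- If the columns indexed by `V` do not span the full column space, there is a nonzero
codeword vanishing on `V`. -/
lemma exists_codeword_vanishing (G : Matrix (Fin m) (Fin n) 𝔽) (V : Finset (Fin n))
    (h : Module.finrank 𝔽 (colSpan G V) + 1 ≤ Module.finrank 𝔽 (rowCode G)) :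
    ∃ c ∈ rowCode G, c ≠ 0 ∧ (∀ j ∈ V, c j = 0) := by
  classical
  set C := rowCode G with hC
  set φ : C →ₗ[𝔽] ({x // x ∈ V} → 𝔽) :=
    (LinearMap.funLeft 𝔽 𝔽 (Subtype.val : {x // x ∈ V} → Fin n)).comp C.subtype with hφ
  have hrange : LinearMap.range φ = C.map
      (LinearMap.funLeft 𝔽 𝔽 (Subtype.val : {x // x ∈ V} → Fin n)) := by
    rw [hφ, LinearMap.range_comp, Submodule.range_subtype]
  have hrn : Module.finrank 𝔽 (LinearMap.range φ) + Module.finrank 𝔽 (LinearMap.ker φ)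
      = Module.finrank 𝔽 C := LinearMap.finrank_range_add_finrank_ker φ
  have hker : LinearMap.ker φ ≠ ⊥ := by
    intro hbot
    rw [hbot] at hrn
    rw [hrange, rank_restrict_eq_colSpan] at hrn
    simp only [finrank_bot, add_zero] at hrn
    omega
  obtain ⟨x, hxmem, hxne⟩ := Submodule.exists_mem_ne_zero_of_ne_bot hker
  refine ⟨(x : Fin n → 𝔽), x.2, ?_, ?_⟩
  · intro h0
    exact hxne (Subtype.ext (by simpa using h0))
  · intro j hj
    rw [LinearMap.mem_ker] at hxmem
    exact congrFun hxmem ⟨j, hj⟩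

/-- Shortening bound: from a coordinate set `U` whose columns have low rank, we obtain a
nonzero codeword of low weight. -/
lemma exists_low_weight_codeword (G : Matrix (Fin m) (Fin n) 𝔽) (U : Finset (Fin n))
    (h : Module.finrank 𝔽 (colSpan G U) + 1 ≤ Module.finrank 𝔽 (rowCode G)) :
    ∃ c ∈ rowCode G, c ≠ 0 ∧
      wt c + U.card + (Module.finrank 𝔽 (rowCode G) - Module.finrank 𝔽 (colSpan G U))
        ≤ n + 1 := by
  classical
  set k := Module.finrank 𝔽 (rowCode G) with hk
  set ρ := Module.finrank 𝔽 (colSpan G U) with hρ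
  set Uc : Finset (Fin n) := Finset.univ \ U with hUc
  have hUccard : Uc.card = n - U.card := by
    rw [hUc, Finset.card_sdiff_of_subset (Finset.subset_univ _), Finset.card_univ, Fintype.card_fin]
  have hUn : U.card ≤ n := by
    have := Finset.card_le_card (Finset.subset_univ U)
    simpa using this
  obtain ⟨W, hWUc, hWcard⟩ :=
    Finset.exists_subset_card_eq (show min (k - ρ - 1) Uc.card ≤ Uc.card from min_le_right _ _)
  have hdisj : Disjoint U W := by
    refine Finset.disjoint_left.mpr ?_
    intro j hjU hjW
    have := hWUc hjW
    rw [hUc, Finset.mem_sdiff] at this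
    exact this.2 hjU
  have hVrank : Module.finrank 𝔽 (colSpan G (U ∪ W)) + 1 ≤ k := by
    have h1 := finrank_colSpan_union_le G U W
    have h2 : W.card ≤ k - ρ - 1 := by rw [hWcard]; exact min_le_left _ _
    omega
  obtain ⟨c, hcC, hc0, hcz⟩ := exists_codeword_vanishing G (U ∪ W) hVrank
  have hwt1 : 1 ≤ wt c := by
    rw [wt, Nat.one_le_iff_ne_zero, ← Nat.pos_iff_ne_zero, Finset.card_pos]
    have : ∃ j, c j ≠ 0 := by
      by_contra hno
      push_neg at hno
      exact hc0 (funext hno)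
    obtain ⟨j, hj⟩ := this
    exact ⟨j, by simp [hj]⟩
  have hwtcard : wt c + (U ∪ W).card ≤ n := by
    have hdisj2 : Disjoint (Finset.univ.filter fun j => c j ≠ 0) (U ∪ W) := by
      refine Finset.disjoint_left.mpr ?_
      intro j hj hjV
      rw [Finset.mem_filter] at hj
      exact hj.2 (hcz j hjV)
    calc wt c + (U ∪ W).card
        = ((Finset.univ.filter fun j => c j ≠ 0) ∪ (U ∪ W)).card := by
          rw [Finset.card_union_of_disjoint hdisj2]; rfl
      _ ≤ (Finset.univ : Finset (Fin n)).card := Finset.card_le_card (Finset.subset_univ _)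
      _ = n := by rw [Finset.card_univ, Fintype.card_fin]
  have hVcard : (U ∪ W).card = U.card + W.card := Finset.card_union_of_disjoint hdisj
  have hWint : W.card = k - ρ - 1 := by
    rcases Nat.le_total (k - ρ - 1) Uc.card with hle | hle
    · rw [hWcard, min_eq_left hle]
    · exfalso
      have : W.card = Uc.card := by rw [hWcard, min_eq_right hle]
      omega
  exact ⟨c, hcC, hc0, by omega⟩

end AuxiliaryLemmas

/-- if `r₁⌈n₁/(r₁+δ₁−1)⌉ ≥ k`, then
`d ≤ n − k + 1 − (⌈k/r₁⌉ − 1)(δ₁ − 1)`. -/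
theorem singleton_bound_two_localities_degenerate {𝔽 : Type*} [Field 𝔽] {m n : ℕ}
    (G : Matrix (Fin m) (Fin n) 𝔽) (k d : ℕ)
    (hk : k = Module.finrank 𝔽 (rowCode G)) (hd : d = minDist (rowCode G))
    (T₁ T₂ : Finset (Fin n)) (n₁ n₂ r₁ r₂ δ₁ δ₂ : ℕ)
    (hdisj : Disjoint T₁ T₂) (hcover : T₁ ∪ T₂ = Finset.univ)
    (hn₁ : T₁.card = n₁) (hn₂ : T₂.card = n₂)
    (hr : r₁ ≤ r₂) (hδ : δ₂ ≤ δ₁) (hδ₂ : 2 ≤ δ₂)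
    (hloc₁ : hasLocality G T₁ r₁ δ₁) (hloc₂ : hasLocality G T₂ r₂ δ₂)
    (h1 : k ≤ r₁ * cdiv n₁ (r₁ + δ₁ - 1)) :
    (d : ℤ) ≤ (n : ℤ) - k + 1 - ((cdiv k r₁ : ℤ) - 1) * ((δ₁ : ℤ) - 1) := by
  classical
  have hδ₁ : 2 ≤ δ₁ := le_trans hδ₂ hδ
  by_cases hk0 : k = 0
  · -- trivial case: the code is zero, `d = 0`.
    subst hk0
    have hC : rowCode G = ⊥ := by
      have hfr : Module.finrank 𝔽 (rowCode G) = 0 := hk.symm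
      exact Submodule.finrank_eq_zero.mp hfr
    have hd0 : d = 0 := by
      rw [hd, minDist]
      have hset : {w | ∃ c ∈ rowCode G, c ≠ 0 ∧ wt c = w} = ∅ := by
        ext w
        simp only [Set.mem_setOf_eq, Set.mem_empty_iff_false, iff_false]
        rintro ⟨c, hcC, hc0, -⟩
        rw [hC, Submodule.mem_bot] at hcC
        exact hc0 hcC
      rw [hset, Nat.sInf_empty]
    have hcdiv : cdiv 0 r₁ = 0 := by
      rcases Nat.eq_zero_or_pos r₁ with h0 | hpos
      · simp [cdiv, h0]
      · simp only [cdiv, Nat.zero_add]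
        exact Nat.div_eq_of_lt (by omega)
    rw [hd0, hcdiv]
    have hδ₁' : (2 : ℤ) ≤ (δ₁ : ℤ) := by exact_mod_cast hδ₁
    push_cast
    nlinarith [Int.natCast_nonneg n]
  -- main case
  have hk1 : 1 ≤ k := Nat.one_le_iff_ne_zero.mpr hk0
  have hr₁ : 1 ≤ r₁ := by
    by_contra hr0
    push_neg at hr0
    have h0 : r₁ = 0 := by omega
    rw [h0, Nat.zero_mul] at h1
    omega
  obtain ⟨b, hb⟩ : ∃ b, r₁ + δ₁ - 1 = b := ⟨_, rfl⟩
  rw [hb] at h1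
  obtain ⟨A, hA⟩ : ∃ A, cdiv k r₁ = A := ⟨_, rfl⟩
  rw [hA]
  obtain ⟨a, ha⟩ : ∃ a, A - 1 = a := ⟨_, rfl⟩
  obtain ⟨cc, hcc⟩ : ∃ c, cdiv n₁ b = c := ⟨_, rfl⟩
  rw [hcc] at h1
  have hA1 : 1 ≤ A := by
    rw [← hA]
    show 1 ≤ (k + r₁ - 1) / r₁
    rw [Nat.one_le_div_iff (by omega)]
    omega
  have hak : a * r₁ + 1 ≤ k := by
    have h2 : A * r₁ ≤ k + r₁ - 1 := by
      have := Nat.div_mul_le_self (k + r₁ - 1) r₁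
      rw [← hA]
      exact this
    have h3 : a * r₁ + r₁ = A * r₁ := by
      have h4 : a + 1 = A := by omega
      calc a * r₁ + r₁ = (a + 1) * r₁ := by ring
        _ = A * r₁ := by rw [h4]
    omega
  have hbpos : 1 ≤ b := by omega
  have hc1 : 1 ≤ cc := by
    by_contra hcc0
    push_neg at hcc0
    have h0 : cc = 0 := by omega
    rw [h0, Nat.mul_zero] at h1
    omega
  have hn₁1 : 1 ≤ n₁ := by
    by_contra hn0
    push_neg at hn0
    have hn00 : n₁ = 0 := by omega
    have h0 : cc = 0 := by
      rw [← hcc, hn00]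
      show (0 + b - 1) / b = 0
      exact Nat.div_eq_of_lt (by omega)
    omega
  have hAc : A ≤ cc := by
    have h2 : k + r₁ - 1 ≤ r₁ * cc + r₁ - 1 := by omega
    have h3 : A ≤ (r₁ * cc + r₁ - 1) / r₁ := by
      rw [← hA]
      exact Nat.div_le_div_right h2
    have h4 : (r₁ * cc + r₁ - 1) / r₁ = cc := by
      have h5 : r₁ * cc + r₁ - 1 = (r₁ - 1) + cc * r₁ := by
        rw [Nat.mul_comm r₁ cc]
        omega
      rw [h5, Nat.add_mul_div_right _ _ (show 0 < r₁ by omega),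
        Nat.div_eq_of_lt (by omega), Nat.zero_add]
    omega
  have hcb : cc * b ≤ n₁ + b - 1 := by
    have := Nat.div_mul_le_self (n₁ + b - 1) b
    rw [← hcc]
    exact this
  have hab : a * b + 1 ≤ n₁ := by
    have h5 : a + 1 ≤ cc := by omega
    have h6 : a * b + b ≤ cc * b := by
      calc a * b + b = (a + 1) * b := by ring
        _ ≤ cc * b := Nat.mul_le_mul_right _ h5
    omega
  -- key spanning property of local groups
  have keyspan : ∀ S E : Finset (Fin n), E ⊆ S → E.card = δ₁ - 1 →
      (∀ E' ⊆ S, E'.card = δ₁ - 1 → ∀ j ∈ E', regenSet G j ((S \ E') ∪ {j})) →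
      ∀ j ∈ S, (fun t => G t j) ∈ colSpan G (S \ E) := by
    intro S E hES hEcard hreg j hjS
    by_cases hjE : j ∈ E
    · obtain ⟨-, hspan⟩ := hreg E hES hEcard j hjE
      have hjSE : j ∉ S \ E := by simp [hjE]
      have heq : ((S \ E) ∪ {j}).erase j = S \ E := by
        ext x
        simp only [Finset.mem_erase, Finset.mem_union, Finset.mem_singleton]
        constructor
        · rintro ⟨hxj, hx | hx⟩
          · exact hx
          · exact absurd hx hxj
        · intro hx
          exact ⟨fun h => hjSE (h ▸ hx), Or.inl hx⟩
      rw [heq] at hspan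
      exact hspan
    · exact Submodule.subset_span ⟨j, by simp [Finset.mem_sdiff, hjS, hjE], rfl⟩
  -- greedy construction of a low-rank, large subset of `T₁`
  have greedy : ∀ s : ℕ, s ≤ a →
      (∃ U : Finset (Fin n),
        Module.finrank 𝔽 (colSpan G U) + 1 ≤ k ∧
        Module.finrank 𝔽 (colSpan G U) + a * (δ₁ - 1) ≤ U.card) ∨
      (∃ U : Finset (Fin n), U ⊆ T₁ ∧
        Module.finrank 𝔽 (colSpan G U) ≤ s * r₁ ∧
        Module.finrank 𝔽 (colSpan G U) + s * (δ₁ - 1) ≤ U.card) := by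
    intro s
    induction s with
    | zero =>
      intro _
      right
      have hbot : colSpan G (∅ : Finset (Fin n)) = ⊥ := by
        rw [colSpan]
        simp
      refine ⟨∅, Finset.empty_subset _, ?_, ?_⟩
      · rw [hbot]; simp
      · rw [hbot]; simp
    | succ s ih =>
      intro hs
      rcases ih (by omega) with hgoal | ⟨U, hUT, hcr, hcard⟩
      · exact Or.inl hgoal
      by_cases hex : ∃ ι ∈ T₁, (fun t => G t ι) ∉ colSpan G U
      · obtain ⟨ι, hιT, hιsp⟩ := hex
        obtain ⟨S, hST, hιS, hδS, hSr, hreg⟩ := hloc₁ ι hιT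
        rw [hb] at hSr
        have hιU : ι ∉ U := fun h => hιsp (Submodule.subset_span ⟨ι, h, rfl⟩)
        have hNδ : δ₁ ≤ (S \ U).card := by
          by_contra hlt
          push_neg at hlt
          obtain ⟨E, hNE, hES, hEcard⟩ := Finset.exists_subsuperset_card_eq
            (show S \ U ⊆ S from Finset.sdiff_subset) (show (S \ U).card ≤ δ₁ - 1 by omega)
            (show δ₁ - 1 ≤ S.card by omega)
          have hcol := keyspan S E hES hEcard hreg ι hιS
          have hsub : S \ E ⊆ U := by
            intro x hx
            rw [Finset.mem_sdiff] at hx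
            by_contra hxU
            exact hx.2 (hNE (by rw [Finset.mem_sdiff]; exact ⟨hx.1, hxU⟩))
          exact hιsp ((colSpan_mono G hsub) hcol)
        obtain ⟨E, hEN, hEcard⟩ := Finset.exists_subset_card_eq
          (show δ₁ - 1 ≤ (S \ U).card by omega)
        have hES : E ⊆ S := hEN.trans Finset.sdiff_subset
        right
        refine ⟨U ∪ S, Finset.union_subset hUT hST, ?_, ?_⟩
        all_goals {
          have hspanle : colSpan G (U ∪ S) ≤ colSpan G (U ∪ ((S \ U) \ E)) := by
            rw [colSpan_union, colSpan_union]
            apply sup_le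
            · exact le_sup_left
            · intro v hv
              have hv' : v ∈ Submodule.span 𝔽 ((fun j => fun t => G t j) '' ↑S) := hv
              refine Submodule.span_le.mpr ?_ hv'
              rintro w ⟨j, hj, rfl⟩
              have hj' : j ∈ S := hj
              have hcol := keyspan S E hES hEcard hreg j hj'
              have hsub : S \ E ⊆ U ∪ ((S \ U) \ E) := by
                intro x hx
                rw [Finset.mem_sdiff] at hx
                rw [Finset.mem_union]
                by_cases hxU : x ∈ U
                · exact Or.inl hxU
                · refine Or.inr ?_
                  rw [Finset.mem_sdiff, Finset.mem_sdiff]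
                  exact ⟨⟨hx.1, hxU⟩, hx.2⟩
              have h9 := (colSpan_mono G hsub) hcol
              rw [colSpan_union] at h9
              exact h9
          have hrk : Module.finrank 𝔽 (colSpan G (U ∪ S))
              ≤ Module.finrank 𝔽 (colSpan G U) + ((S \ U) \ E).card :=
            (Submodule.finrank_mono hspanle).trans (finrank_colSpan_union_le G U ((S \ U) \ E))
          have hNEcard : ((S \ U) \ E).card = (S \ U).card - (δ₁ - 1) := by
            rw [Finset.card_sdiff_of_subset hEN, hEcard]
          have hNcard : (S \ U).card ≤ r₁ + δ₁ - 1 :=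
            (Finset.card_le_card Finset.sdiff_subset).trans (hb ▸ hSr)
          have hUScard : (U ∪ S).card = U.card + (S \ U).card := by
            rw [← Finset.union_sdiff_self_eq_union,
              Finset.card_union_of_disjoint Finset.disjoint_sdiff]
          have hmul1 : (s + 1) * r₁ = s * r₁ + r₁ := by ring
          have hmul2 : (s + 1) * (δ₁ - 1) = s * (δ₁ - 1) + (δ₁ - 1) := by ring
          omega
        }
      · push_neg at hex
        left
        have hT₁le : colSpan G T₁ ≤ colSpan G U := by
          rw [colSpan]
          apply Submodule.span_le.mpr
          rintro w ⟨j, hj, rfl⟩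
          exact hex j hj
        have hcrT : Module.finrank 𝔽 (colSpan G T₁) ≤ Module.finrank 𝔽 (colSpan G U) :=
          Submodule.finrank_mono hT₁le
        refine ⟨T₁, ?_, ?_⟩
        · have h9 : s * r₁ ≤ a * r₁ := Nat.mul_le_mul_right _ (by omega)
          omega
        · rw [hn₁]
          have h9 : s * r₁ + r₁ ≤ a * r₁ := by
            have h10 : (s + 1) * r₁ ≤ a * r₁ := Nat.mul_le_mul_right _ hs
            calc s * r₁ + r₁ = (s + 1) * r₁ := by ring
              _ ≤ a * r₁ := h10
          have h10 : a * b = a * r₁ + a * (δ₁ - 1) := by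
            have hb' : b = r₁ + (δ₁ - 1) := by
              rw [← hb]
              exact Nat.add_sub_assoc (le_trans one_le_two hδ₁) r₁
            rw [hb', Nat.mul_add]
          have h11 : s * (δ₁ - 1) ≤ a * (δ₁ - 1) := Nat.mul_le_mul_right _ (by omega)
          omega
  -- apply the greedy construction with `s = a`
  have hfinal : ∃ U : Finset (Fin n),
      Module.finrank 𝔽 (colSpan G U) + 1 ≤ k ∧
      Module.finrank 𝔽 (colSpan G U) + a * (δ₁ - 1) ≤ U.card := by
    rcases greedy a le_rfl with hgoal | ⟨U, hUT, hcr, hcard⟩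
    · exact hgoal
    exact ⟨U, by omega, hcard⟩
  obtain ⟨U, hU1, hU2⟩ := hfinal
  obtain ⟨c, hcC, hc0, hwt⟩ := exists_low_weight_codeword G U (by rw [← hk]; exact hU1)
  rw [← hk] at hwt
  have hdle : d ≤ wt c := by
    rw [hd, minDist]
    exact Nat.sInf_le ⟨c, hcC, hc0, rfl⟩
  have hnat : d + k + a * (δ₁ - 1) ≤ n + 1 := by omega
  have hQcast : ((a * (δ₁ - 1) : ℕ) : ℤ) = (a : ℤ) * ((δ₁ : ℤ) - 1) := by
    push_cast [Nat.cast_sub (show 1 ≤ δ₁ by omega)]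
    ring
  have hgoal : (d : ℤ) + (k : ℤ) + (a : ℤ) * ((δ₁ : ℤ) - 1) ≤ (n : ℤ) + 1 := by
    have hcast : ((d + k + a * (δ₁ - 1) : ℕ) : ℤ) ≤ ((n + 1 : ℕ) : ℤ) := by exact_mod_cast hnat
    push_cast at hcast
    rw [← hQcast]
    push_cast
    linarith [hcast]
  have hAcast : ((A : ℕ) : ℤ) - 1 = (a : ℤ) := by
    have h12 : A = a + 1 := by omega
    rw [h12]
    push_cast
    ring
  rw [hAcast]
  linarith [hgoal]
end
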